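/- For x ≥ 0, x·log x = ∫₍₀,∞₎ ( x/(1+t) − x/(x+t) ) dt, where the integral is with respect to Lebesgue measure on (0,∞) and 0·log 0 := 0. -/

import Mathlib

open Real MeasureTheory Set Filter Topology

private lemma xlogx_aux_deriv (x : ℝ) (hx : 0 < x) (t : ℝ) (ht : t ∈ Set.Ici (0:ℝ)) :
    HasDerivAt (fun t => x * (Real.log (1 + t) - Real.log (x + t)))
      (x / (1 + t) - x / (x + t)) t := by
  have h1 : (0:ℝ) < 1 + t := by linarith [ht.out]
  have h2 : (0:ℝ) < x + t := by linarith [ht.out]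
  have d1 : HasDerivAt (fun t : ℝ => Real.log (1 + t)) (1 / (1 + t)) t := by
    simpa using ((hasDerivAt_id t).const_add 1).log h1.ne'
  have d2 : HasDerivAt (fun t : ℝ => Real.log (x + t)) (1 / (x + t)) t := by
    simpa using ((hasDerivAt_id t).const_add x).log h2.ne'
  have := ((d1.sub d2).const_mul x)
  refine this.congr_deriv ?_
  ring

private lemma xlogx_aux_tendsto (x : ℝ) (hx : 0 < x) :
    Tendsto (fun t => x * (Real.log (1 + t) - Real.log (x + t))) atTop (𝓝 0) := by
  have h : Tendsto (fun t : ℝ => (1 - x) / (x + t)) atTop (𝓝 0) :=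
    tendsto_const_nhds.div_atTop (tendsto_atTop_add_const_left _ x tendsto_id)
  have h2 : Tendsto (fun t : ℝ => 1 + (1 - x) / (x + t)) atTop (𝓝 1) := by
    simpa using h.const_add 1
  have h3 : Tendsto (fun t : ℝ => Real.log (1 + (1 - x) / (x + t))) atTop (𝓝 0) := by
    have := (Real.continuousAt_log (by norm_num : (1:ℝ) ≠ 0)).tendsto.comp h2
    simpa [Function.comp_def] using this
  have heq : ∀ᶠ t in atTop, Real.log (1 + (1 - x) / (x + t))
      = Real.log (1 + t) - Real.log (x + t) := by
    filter_upwards [eventually_ge_atTop (0:ℝ)] with t ht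
    have h1 : (0:ℝ) < 1 + t := by linarith
    have hxt : (0:ℝ) < x + t := by linarith
    rw [show 1 + (1 - x) / (x + t) = (1 + t) / (x + t) by field_simp; ring,
      Real.log_div h1.ne' hxt.ne']
  have := (h3.congr' heq).const_mul x
  simpa using this

theorem xlogx_integral_representation (x : ℝ) (hx : 0 ≤ x) :
    x * Real.log x = ∫ t in Set.Ioi (0 : ℝ), (x / (1 + t) - x / (x + t)) := by
  rcases eq_or_lt_of_le hx with rfl | hx
  · simp
  · have key : ∫ t in Set.Ioi (0 : ℝ), (x / (1 + t) - x / (x + t))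
        = 0 - x * (Real.log (1 + 0) - Real.log (x + 0)) := by
      rcases le_total 1 x with hx1 | hx1
      · refine integral_Ioi_of_hasDerivAt_of_nonneg' (xlogx_aux_deriv x hx)
          (fun t ht => ?_) (xlogx_aux_tendsto x hx)
        have h1 : (0:ℝ) < 1 + t := by linarith [ht.out]
        have h2 : (0:ℝ) < x + t := by linarith [ht.out]
        have : x / (x + t) ≤ x / (1 + t) :=
          div_le_div_of_nonneg_left hx.le h1 (by linarith)
        linarith
      · refine integral_Ioi_of_hasDerivAt_of_nonpos' (xlogx_aux_deriv x hx)
          (fun t ht => ?_) (xlogx_aux_tendsto x hx)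
        have h1 : (0:ℝ) < 1 + t := by linarith [ht.out]
        have h2 : (0:ℝ) < x + t := by linarith [ht.out]
        have : x / (1 + t) ≤ x / (x + t) :=
          div_le_div_of_nonneg_left hx.le h2 (by linarith)
        linarith
    rw [key]
    simp [Real.log_one]
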